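/- Let p ≥ 2, μ ∈ S^{p-1}, and let f(x) = F(μᵀx) and g(x) = G(μᵀx) be pdfs on S^{p-1}, rotationally symmetric about the same μ, absolutely continuous and unimodal with mode μ, i.e. F and G are continuous strictly increasing nonnegative functions on [−1,1]. Then the convolved pdf f ⋆_μ g, which is rotationally symmetric about μ, is also unimodal with mode μ: writing (f ⋆_μ g)(x) = H(μᵀx), the function H is strictly increasing on [−1,1], so the maximum of f ⋆_μ g on S^{p-1} is attained exactly at x = μ. -/

import Mathlib

open MeasureTheory Set
open scoped RealInnerProductSpace
open scoped Pointwise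

noncomputable section

/-- The unit sphere `S^{p-1} = {x ∈ ℝ^p : ‖x‖ = 1}` in `ℝ^p`. -/
abbrev Sph (p : ℕ) : Type := Metric.sphere (0 : EuclideanSpace ℝ (Fin p)) 1

/-- The `(p-1)`-dimensional surface measure on the unit sphere `S^{p-1}`. -/
def sphMeasure (p : ℕ) : Measure (Sph p) :=
  (volume : Measure (EuclideanSpace ℝ (Fin p))).toSphere

/-- The cosine `xᵀy` of the angle between two points of the sphere. -/
def cosAngle {p : ℕ} (x y : Sph p) : ℝ :=
  ⟪(x : EuclideanSpace ℝ (Fin p)), (y : EuclideanSpace ℝ (Fin p))⟫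

section Aux

variable {p : ℕ}

local notation "E" => EuclideanSpace ℝ (Fin p)

/-- map of the sphere induced by a linear isometry equiv -/
def sphMap (R : E ≃ₗᵢ[ℝ] E) (y : Sph p) : Sph p :=
  ⟨R y, by
    have := y.2
    simp only [mem_sphere_iff_norm, sub_zero] at this ⊢
    rw [R.norm_map]; exact this⟩

@[simp] lemma sphMap_coe (R : E ≃ₗᵢ[ℝ] E) (y : Sph p) : (sphMap R y : E) = R y := rfl

def sphHomeo (R : E ≃ₗᵢ[ℝ] E) : Sph p ≃ₜ Sph p where
  toFun := sphMap R
  invFun := sphMap R.symm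
  left_inv := fun y => Subtype.ext (by simp)
  right_inv := fun y => Subtype.ext (by simp)
  continuous_toFun := Continuous.subtype_mk (R.continuous.comp continuous_subtype_val) _
  continuous_invFun := Continuous.subtype_mk (R.symm.continuous.comp continuous_subtype_val) _

def sphMequiv (R : E ≃ₗᵢ[ℝ] E) : Sph p ≃ᵐ Sph p := (sphHomeo R).toMeasurableEquiv

lemma sphMequiv_coe (R : E ≃ₗᵢ[ℝ] E) : ⇑(sphMequiv R) = sphMap R := rfl

lemma coe_image_preimage (R : E ≃ₗᵢ[ℝ] E) (s : Set (Sph p)) :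
    (Subtype.val '' (sphMap R ⁻¹' s) : Set E) = R ⁻¹' (Subtype.val '' s) := by
  ext z
  constructor
  · rintro ⟨y, hy, rfl⟩
    exact ⟨sphMap R y, hy, rfl⟩
  · rintro ⟨w, hw, hwz⟩
    refine ⟨sphMap R.symm w, ?_, ?_⟩
    · show sphMap R (sphMap R.symm w) ∈ s
      have : sphMap R (sphMap R.symm w) = w := Subtype.ext (by simp)
      rwa [this]
    · show (R.symm (w : E)) = z
      rw [hwz]; simp

lemma smul_preimage_linear (R : E ≃ₗᵢ[ℝ] E) (I : Set ℝ) (Y : Set E) :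
    I • (R ⁻¹' Y) = R ⁻¹' (I • Y) := by
  ext z
  simp only [Set.mem_smul, Set.mem_preimage]
  constructor
  · rintro ⟨r, hr, w, hw, rfl⟩
    exact ⟨r, hr, R w, hw, by simp⟩
  · rintro ⟨r, hr, u, hu, huz⟩
    refine ⟨r, hr, R.symm u, by simpa using hu, R.injective ?_⟩
    simpa [_root_.map_smul] using huz

lemma sphMap_measurePreserving (R : E ≃ₗᵢ[ℝ] E) :
    MeasurePreserving (sphMap R) (sphMeasure p) (sphMeasure p) := by
  have hmap : (sphMeasure p).map (sphMequiv R) = sphMeasure p := by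
    ext s hs
    rw [MeasurableEquiv.map_apply, sphMequiv_coe]
    have hms : MeasurableSet (sphMap R ⁻¹' s) := (sphHomeo R).continuous.measurable hs
    rw [sphMeasure, Measure.toSphere_apply' _ hs, Measure.toSphere_apply' _ hms]
    congr 1
    rw [coe_image_preimage, smul_preimage_linear]
    have Rm : E ≃ᵐ E := R.toHomeomorph.toMeasurableEquiv
    calc volume (R ⁻¹' (Set.Ioo (0:ℝ) 1 • (Subtype.val '' s)))
        = (volume.map R.toHomeomorph.toMeasurableEquiv)
            (Set.Ioo (0:ℝ) 1 • (Subtype.val '' s)) := by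
          rw [MeasurableEquiv.map_apply]; rfl
      _ = volume (Set.Ioo (0:ℝ) 1 • (Subtype.val '' s)) := by
          have : volume.map R.toHomeomorph.toMeasurableEquiv = volume.map R :=
            rfl
          rw [this, R.measurePreserving.map_eq]
  exact ⟨(sphHomeo R).continuous.measurable, by rw [← sphMequiv_coe]; exact hmap⟩

lemma integral_sphMap (R : E ≃ₗᵢ[ℝ] E) (f : Sph p → ℝ) :
    ∫ y, f (sphMap R y) ∂(sphMeasure p) = ∫ y, f y ∂(sphMeasure p) :=
  (sphMap_measurePreserving R).integral_comp (sphMequiv R).measurableEmbedding f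

end Aux
section Aux2

variable {p : ℕ}

local notation "E" => EuclideanSpace ℝ (Fin p)

instance : IsFiniteMeasure (sphMeasure p) := by
  rw [sphMeasure]; infer_instance

lemma norm_sph (x : Sph p) : ‖(x : E)‖ = 1 := by
  have := x.2; simpa [mem_sphere_iff_norm] using this

lemma cosAngle_mem_Icc (x y : Sph p) : cosAngle x y ∈ Icc (-1 : ℝ) 1 := by
  have h := abs_real_inner_le_norm (x : E) (y : E)
  rw [norm_sph, norm_sph, mul_one] at h
  exact abs_le.mp h

lemma cosAngle_self (x : Sph p) : cosAngle x x = 1 := by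
  rw [cosAngle, real_inner_self_eq_norm_sq, norm_sph]; norm_num

lemma continuous_cosAngle (x : Sph p) : Continuous (fun y : Sph p => cosAngle x y) :=
  Continuous.inner continuous_const continuous_subtype_val

lemma integrable_cont (f : Sph p → ℝ) (hf : Continuous f) : Integrable f (sphMeasure p) := by
  have : CompactSpace (Sph p) := isCompact_iff_compactSpace.mp (isCompact_sphere 0 1)
  have hcs : HasCompactSupport f :=
    IsCompact.of_isClosed_subset isCompact_univ (isClosed_tsupport f) (Set.subset_univ _)
  exact hf.integrable_of_hasCompactSupport hcs

lemma sphMeasure_halfspace_pos (hp : 2 ≤ p) (v : E) (hv : v ≠ 0) :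
    0 < sphMeasure p {y : Sph p | 0 < ⟪v, (y : E)⟫} := by
  set A : Set (Sph p) := {y : Sph p | 0 < ⟪v, (y : E)⟫}
  have hAopen : IsOpen A :=
    isOpen_lt continuous_const (continuous_const.inner continuous_subtype_val)
  have hAm : MeasurableSet A := hAopen.measurableSet
  rw [sphMeasure, Measure.toSphere_apply' _ hAm]
  set U : Set E := Metric.ball 0 1 ∩ {z : E | 0 < ⟪v, z⟫}
  have hUopen : IsOpen U :=
    Metric.isOpen_ball.inter (isOpen_lt continuous_const (continuous_const.inner continuous_id))
  have hvnorm : (0:ℝ) < ‖v‖ := norm_pos_iff.mpr hv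
  have hUne : U.Nonempty := by
    refine ⟨(2⁻¹ * ‖v‖⁻¹) • v, ?_, ?_⟩
    · simp only [Metric.mem_ball, dist_zero_right, norm_smul]
      rw [Real.norm_eq_abs, abs_of_pos (by positivity)]
      rw [mul_assoc, inv_mul_cancel₀ (ne_of_gt hvnorm)]
      norm_num
    · simp only [Set.mem_setOf_eq, real_inner_smul_right]
      have : ⟪v, v⟫ = ‖v‖ ^ 2 := real_inner_self_eq_norm_sq v
      rw [this]; positivity
  have hsub : U ⊆ Set.Ioo (0:ℝ) 1 • (Subtype.val '' A) := by
    rintro z ⟨hz1, hz2⟩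
    simp only [Metric.mem_ball, dist_zero_right] at hz1
    have hz0 : z ≠ 0 := by
      rintro rfl; simp at hz2
    have hzn : (0:ℝ) < ‖z‖ := norm_pos_iff.mpr hz0
    refine Set.mem_smul.mpr ⟨‖z‖, ⟨hzn, hz1⟩, ‖z‖⁻¹ • z, ?_, ?_⟩
    · refine ⟨⟨‖z‖⁻¹ • z, ?_⟩, ?_, rfl⟩
      · simp only [mem_sphere_iff_norm, sub_zero]
        exact norm_smul_inv_norm hz0
      · show 0 < ⟪v, ‖z‖⁻¹ • z⟫
        rw [real_inner_smul_right]
        exact mul_pos (inv_pos.mpr hzn) hz2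
    · exact smul_inv_smul₀ (ne_of_gt hzn) z
  have hU : 0 < volume U := hUopen.measure_pos volume hUne
  have hle : volume U ≤ volume (Set.Ioo (0:ℝ) 1 • (Subtype.val '' A)) := measure_mono hsub
  have hdim : (Module.finrank ℝ (EuclideanSpace ℝ (Fin p)) : ENNReal) ≠ 0 := by
    rw [finrank_euclideanSpace_fin]
    simp only [ne_eq, Nat.cast_eq_zero]
    omega
  exact ENNReal.mul_pos hdim (ne_of_gt (lt_of_lt_of_le hU hle))

end Aux2
section Aux3

variable {p : ℕ}

open Submodule

local notation "E" => EuclideanSpace ℝ (Fin p)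

lemma reflection_inner (K : Submodule ℝ E) [HasOrthogonalProjection K] (a b : E) :
    ⟪a, (reflection K b : E)⟫ = ⟪(reflection K a : E), b⟫ := by
  conv_lhs => rw [← reflection_reflection K a]
  exact LinearIsometryEquiv.inner_map_map (reflection K) (reflection K a) b

lemma reflection_orth_singleton (v z : E) :
    (reflection (ℝ ∙ v)ᗮ z : E) = z - (2 * (⟪v, z⟫ / ‖v‖ ^ 2)) • v := by
  rw [reflection_orthogonal_apply, reflection_singleton_apply]
  rw [neg_sub]
  congr 1
  rw [two_smul]
  rw [two_mul, add_smul]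
  norm_cast

end Aux3

/-- The spherical convolution `(f ⋆_μ g)(x) = ∫_{S^{p-1}} F(xᵀy) G(yᵀμ) dy` of two
rotationally symmetric functions `f(x) = F(μᵀx)`, `g(x) = G(μᵀx)` about the axis `μ`. -/
def sphConv {p : ℕ} (F G : ℝ → ℝ) (μ : Sph p) (x : Sph p) : ℝ :=
  ∫ y : Sph p, F (cosAngle x y) * G (cosAngle y μ) ∂(sphMeasure p)

/-- `F : [-1,1] → ℝ` is the profile of a rotationally symmetric probability density
function `x ↦ F(μᵀx)` on `S^{p-1}`: it is nonnegative and the corresponding rotationally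
symmetric function is integrable with total integral `1` (about any axis). -/
def IsPdfProfile (p : ℕ) (F : ℝ → ℝ) : Prop :=
  (∀ t ∈ Icc (-1 : ℝ) 1, 0 ≤ F t) ∧
  ∀ μ : Sph p, Integrable (fun x : Sph p => F (cosAngle μ x)) (sphMeasure p) ∧
    ∫ x : Sph p, F (cosAngle μ x) ∂(sphMeasure p) = 1

section Main

variable {p : ℕ}

open Submodule

local notation "E" => EuclideanSpace ℝ (Fin p)

/-- The key strict-monotonicity lemma, proved by the reflection pairing trick. -/
lemma key_lemma (μ : Sph p) (F G : ℝ → ℝ)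
    (hFc : ContinuousOn F (Icc (-1 : ℝ) 1)) (hGc : ContinuousOn G (Icc (-1 : ℝ) 1))
    (hFm : StrictMonoOn F (Icc (-1 : ℝ) 1)) (hGm : StrictMonoOn G (Icc (-1 : ℝ) 1))
    (hp : 2 ≤ p) (x₁ x₂ : Sph p) (hlt : cosAngle μ x₁ < cosAngle μ x₂) :
    sphConv F G μ x₁ < sphConv F G μ x₂ := by
  have contF : ∀ x : Sph p, Continuous fun y : Sph p => F (cosAngle x y) := fun x =>
    hFc.comp_continuous (continuous_cosAngle x) fun y => cosAngle_mem_Icc x y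
  have contG : Continuous fun y : Sph p => G (cosAngle y μ) := by
    apply hGc.comp_continuous
    · exact Continuous.inner continuous_subtype_val continuous_const
    · exact fun y => cosAngle_mem_Icc y μ
  have intFG : ∀ x : Sph p,
      Integrable (fun y : Sph p => F (cosAngle x y) * G (cosAngle y μ)) (sphMeasure p) :=
    fun x => integrable_cont _ ((contF x).mul contG)
  set v : E := (x₂ : E) - (x₁ : E) with hvdef
  have hμv : ⟪(μ : E), v⟫ = cosAngle μ x₂ - cosAngle μ x₁ := by
    rw [hvdef, inner_sub_right]; rfl
  have hμvpos : 0 < ⟪(μ : E), v⟫ := by rw [hμv]; linarith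
  have hv0 : v ≠ 0 := by
    intro h; rw [h, inner_zero_right] at hμvpos; exact lt_irrefl _ hμvpos
  have hnorm12 : ‖(x₂ : E)‖ = ‖(x₁ : E)‖ := by rw [norm_sph, norm_sph]
  have hRx2 : reflection (ℝ ∙ v)ᗮ (x₂ : E) = x₁ := reflection_sub hnorm12
  have hRx1 : reflection (ℝ ∙ v)ᗮ (x₁ : E) = x₂ := by
    have h := congrArg (reflection (ℝ ∙ v)ᗮ) hRx2
    rw [reflection_reflection] at h
    exact h.symm
  have hA1 : ∀ y : Sph p, cosAngle x₂ (sphMap (reflection (ℝ ∙ v)ᗮ) y) = cosAngle x₁ y := by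
    intro y
    simp only [cosAngle, sphMap_coe]
    rw [reflection_inner, hRx2]
  have hA2 : ∀ y : Sph p, cosAngle x₁ (sphMap (reflection (ℝ ∙ v)ᗮ) y) = cosAngle x₂ y := by
    intro y
    simp only [cosAngle, sphMap_coe]
    rw [reflection_inner, hRx1]
  have hRform : ∀ z : E,
      ⟪(μ : E), reflection (ℝ ∙ v)ᗮ z⟫ = ⟪(μ : E), z⟫ - 2 * (⟪v, z⟫ / ‖v‖ ^ 2) * ⟪(μ : E), v⟫ := by
    intro z
    rw [reflection_orth_singleton, inner_sub_right, real_inner_smul_right]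
  have hdiff1 : ∀ y : Sph p, cosAngle x₂ y - cosAngle x₁ y = ⟪v, (y : E)⟫ := by
    intro y
    rw [hvdef, inner_sub_left]; rfl
  have hdiff2 : ∀ y : Sph p, cosAngle y μ - cosAngle (sphMap (reflection (ℝ ∙ v)ᗮ) y) μ
      = 2 * (⟪v, (y : E)⟫ / ‖v‖ ^ 2) * ⟪(μ : E), v⟫ := by
    intro y
    have h1 : cosAngle y μ = ⟪(μ : E), (y : E)⟫ := real_inner_comm _ _
    have h2 : cosAngle (sphMap (reflection (ℝ ∙ v)ᗮ) y) μ
        = ⟪(μ : E), reflection (ℝ ∙ v)ᗮ (y : E)⟫ := real_inner_comm _ _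
    rw [h1, h2, hRform]; ring
  -- the symmetrized integrand Φ is nonnegative, and positive on a half-sphere
  set Φ : Sph p → ℝ := fun y => (F (cosAngle x₂ y) - F (cosAngle x₁ y)) *
      (G (cosAngle y μ) - G (cosAngle (sphMap (reflection (ℝ ∙ v)ᗮ) y) μ)) with hΦdef
  have hΦnonneg : 0 ≤ Φ := by
    intro y
    have hvsq : (0:ℝ) < ‖v‖ ^ 2 := pow_pos (norm_pos_iff.mpr hv0) 2
    show (0:ℝ) ≤ Φ y
    rw [hΦdef]
    simp only
    rcases le_or_gt 0 ⟪v, (y : E)⟫ with hs | hs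
    · have h1 : F (cosAngle x₁ y) ≤ F (cosAngle x₂ y) :=
        hFm.monotoneOn (cosAngle_mem_Icc x₁ y) (cosAngle_mem_Icc x₂ y)
          (by have := hdiff1 y; linarith)
      have h2 : G (cosAngle (sphMap (reflection (ℝ ∙ v)ᗮ) y) μ) ≤ G (cosAngle y μ) := by
        apply hGm.monotoneOn (cosAngle_mem_Icc _ μ) (cosAngle_mem_Icc y μ)
        have hd := hdiff2 y
        have : 0 ≤ 2 * (⟪v, (y : E)⟫ / ‖v‖ ^ 2) * ⟪(μ : E), v⟫ :=
          mul_nonneg (mul_nonneg (by norm_num) (div_nonneg hs (le_of_lt hvsq)))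
            (le_of_lt hμvpos)
        linarith
      exact mul_nonneg (by linarith) (by linarith)
    · have h1 : F (cosAngle x₂ y) ≤ F (cosAngle x₁ y) :=
        hFm.monotoneOn (cosAngle_mem_Icc x₂ y) (cosAngle_mem_Icc x₁ y)
          (by have := hdiff1 y; linarith)
      have h2 : G (cosAngle y μ) ≤ G (cosAngle (sphMap (reflection (ℝ ∙ v)ᗮ) y) μ) := by
        apply hGm.monotoneOn (cosAngle_mem_Icc y μ) (cosAngle_mem_Icc _ μ)
        have hd := hdiff2 y
        have : 2 * (⟪v, (y : E)⟫ / ‖v‖ ^ 2) * ⟪(μ : E), v⟫ ≤ 0 :=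
          mul_nonpos_of_nonpos_of_nonneg
            (by have : ⟪v, (y : E)⟫ / ‖v‖ ^ 2 ≤ 0 :=
                  div_nonpos_of_nonpos_of_nonneg (le_of_lt hs) (le_of_lt hvsq)
                linarith)
            (le_of_lt hμvpos)
        linarith
      nlinarith
  have hΦcont : Continuous Φ := by
    rw [hΦdef]
    apply Continuous.mul ((contF x₂).sub (contF x₁))
    apply Continuous.sub contG
    exact contG.comp (sphHomeo (reflection (ℝ ∙ v)ᗮ)).continuous
  have hΦint : Integrable Φ (sphMeasure p) := integrable_cont _ hΦcont
  have hΦsupp : {y : Sph p | 0 < ⟪v, (y : E)⟫} ⊆ Function.support Φ := by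
    intro y hy
    have hs : 0 < ⟪v, (y : E)⟫ := hy
    have hvsq : (0:ℝ) < ‖v‖ ^ 2 := pow_pos (norm_pos_iff.mpr hv0) 2
    have h1 : F (cosAngle x₁ y) < F (cosAngle x₂ y) :=
      hFm (cosAngle_mem_Icc x₁ y) (cosAngle_mem_Icc x₂ y)
        (by have := hdiff1 y; linarith)
    have h2 : G (cosAngle (sphMap (reflection (ℝ ∙ v)ᗮ) y) μ) < G (cosAngle y μ) := by
      apply hGm (cosAngle_mem_Icc _ μ) (cosAngle_mem_Icc y μ)
      have hd := hdiff2 y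
      have : 0 < 2 * (⟪v, (y : E)⟫ / ‖v‖ ^ 2) * ⟪(μ : E), v⟫ :=
        mul_pos (mul_pos (by norm_num) (div_pos hs hvsq)) hμvpos
      linarith
    exact ne_of_gt (mul_pos (by linarith) (by linarith))
  have hΦpos : 0 < ∫ y, Φ y ∂(sphMeasure p) := by
    rw [integral_pos_iff_support_of_nonneg hΦnonneg hΦint]
    exact lt_of_lt_of_le (sphMeasure_halfspace_pos hp v hv0) (measure_mono hΦsupp)
  -- relate ∫ Φ to the difference of the convolutions
  have hDint : Integrable
      (fun y : Sph p => (F (cosAngle x₂ y) - F (cosAngle x₁ y)) * G (cosAngle y μ))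
      (sphMeasure p) := integrable_cont _ (((contF x₂).sub (contF x₁)).mul contG)
  have hDRint : Integrable
      (fun y : Sph p => (F (cosAngle x₂ (sphMap (reflection (ℝ ∙ v)ᗮ) y))
          - F (cosAngle x₁ (sphMap (reflection (ℝ ∙ v)ᗮ) y)))
        * G (cosAngle (sphMap (reflection (ℝ ∙ v)ᗮ) y) μ)) (sphMeasure p) :=
    integrable_cont _ ((((contF x₂).sub (contF x₁)).mul contG).comp
      (sphHomeo (reflection (ℝ ∙ v)ᗮ)).continuous)
  have hsub : sphConv F G μ x₂ - sphConv F G μ x₁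
      = ∫ y, (F (cosAngle x₂ y) - F (cosAngle x₁ y)) * G (cosAngle y μ) ∂(sphMeasure p) := by
    rw [sphConv, sphConv, ← integral_sub (intFG x₂) (intFG x₁)]
    congr 1; funext y; ring
  have hptwise : ∀ y : Sph p, Φ y
      = (F (cosAngle x₂ y) - F (cosAngle x₁ y)) * G (cosAngle y μ)
        + (F (cosAngle x₂ (sphMap (reflection (ℝ ∙ v)ᗮ) y))
            - F (cosAngle x₁ (sphMap (reflection (ℝ ∙ v)ᗮ) y)))
          * G (cosAngle (sphMap (reflection (ℝ ∙ v)ᗮ) y) μ) := by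
    intro y
    rw [hΦdef]
    simp only
    rw [hA1 y, hA2 y]
    ring
  have hswap : ∫ y, (F (cosAngle x₂ (sphMap (reflection (ℝ ∙ v)ᗮ) y))
          - F (cosAngle x₁ (sphMap (reflection (ℝ ∙ v)ᗮ) y)))
        * G (cosAngle (sphMap (reflection (ℝ ∙ v)ᗮ) y) μ) ∂(sphMeasure p)
      = ∫ y, (F (cosAngle x₂ y) - F (cosAngle x₁ y)) * G (cosAngle y μ) ∂(sphMeasure p) :=
    integral_sphMap (reflection (ℝ ∙ v)ᗮ)
      (fun y => (F (cosAngle x₂ y) - F (cosAngle x₁ y)) * G (cosAngle y μ))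
  have hΦeq : ∫ y, Φ y ∂(sphMeasure p)
      = 2 * ∫ y, (F (cosAngle x₂ y) - F (cosAngle x₁ y)) * G (cosAngle y μ) ∂(sphMeasure p) := by
    calc ∫ y, Φ y ∂(sphMeasure p)
        = ∫ y, ((F (cosAngle x₂ y) - F (cosAngle x₁ y)) * G (cosAngle y μ)
            + (F (cosAngle x₂ (sphMap (reflection (ℝ ∙ v)ᗮ) y))
                - F (cosAngle x₁ (sphMap (reflection (ℝ ∙ v)ᗮ) y)))
              * G (cosAngle (sphMap (reflection (ℝ ∙ v)ᗮ) y) μ)) ∂(sphMeasure p) := by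
          congr 1; funext y; exact hptwise y
      _ = (∫ y, (F (cosAngle x₂ y) - F (cosAngle x₁ y)) * G (cosAngle y μ) ∂(sphMeasure p))
          + ∫ y, (F (cosAngle x₂ (sphMap (reflection (ℝ ∙ v)ᗮ) y))
              - F (cosAngle x₁ (sphMap (reflection (ℝ ∙ v)ᗮ) y)))
            * G (cosAngle (sphMap (reflection (ℝ ∙ v)ᗮ) y) μ) ∂(sphMeasure p) :=
          integral_add hDint hDRint
      _ = 2 * ∫ y, (F (cosAngle x₂ y) - F (cosAngle x₁ y)) * G (cosAngle y μ) ∂(sphMeasure p) := by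
          rw [hswap]; ring
  rw [hΦeq] at hΦpos
  linarith

end Main
section Main2

variable {p : ℕ}

open Submodule

local notation "E" => EuclideanSpace ℝ (Fin p)

/-- Rotation invariance: the convolution depends only on the cosine of the angle to `μ`. -/
lemma rep_lemma (μ : Sph p) (F G : ℝ → ℝ) (x y : Sph p)
    (hxy : cosAngle μ x = cosAngle μ y) : sphConv F G μ x = sphConv F G μ y := by
  by_cases hxyeq : x = y
  · rw [hxyeq]
  have hv0 : ((x : E) - (y : E)) ≠ 0 :=
    sub_ne_zero.mpr fun h => hxyeq (Subtype.ext h)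
  have hRx : reflection (ℝ ∙ ((x : E) - (y : E)))ᗮ (x : E) = y :=
    reflection_sub (by rw [norm_sph, norm_sph])
  have hμmem : (μ : E) ∈ (ℝ ∙ ((x : E) - (y : E)))ᗮ := by
    rw [Submodule.mem_orthogonal_singleton_iff_inner_right, inner_sub_left,
      real_inner_comm (μ : E) (x : E), real_inner_comm (μ : E) (y : E)]
    exact sub_eq_zero_of_eq hxy
  have hRμ : reflection (ℝ ∙ ((x : E) - (y : E)))ᗮ (μ : E) = μ :=
    reflection_mem_subspace_eq_self hμmem
  have h1 : ∀ z : Sph p,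
      cosAngle x (sphMap (reflection (ℝ ∙ ((x : E) - (y : E)))ᗮ) z) = cosAngle y z := by
    intro z
    simp only [cosAngle, sphMap_coe]
    rw [reflection_inner, hRx]
  have h2 : ∀ z : Sph p,
      cosAngle (sphMap (reflection (ℝ ∙ ((x : E) - (y : E)))ᗮ) z) μ = cosAngle z μ := by
    intro z
    simp only [cosAngle, sphMap_coe]
    rw [real_inner_comm, reflection_inner, hRμ, real_inner_comm]
  calc sphConv F G μ x
      = ∫ z, F (cosAngle x (sphMap (reflection (ℝ ∙ ((x : E) - (y : E)))ᗮ) z))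
          * G (cosAngle (sphMap (reflection (ℝ ∙ ((x : E) - (y : E)))ᗮ) z) μ)
          ∂(sphMeasure p) :=
        (integral_sphMap (reflection (ℝ ∙ ((x : E) - (y : E)))ᗮ)
          (fun z => F (cosAngle x z) * G (cosAngle z μ))).symm
    _ = sphConv F G μ y := by
        rw [sphConv]
        congr 1; funext z
        rw [h1 z, h2 z]

end Main2

/-- unimodality of the spherical convolution. If `f(x) = F(μᵀx)` and
`g(x) = G(μᵀx)` are absolutely continuous unimodal rotationally symmetric pdfs on
`S^{p-1}` with common mode `μ` (i.e. `F` and `G` are continuous, strictly increasing and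
nonnegative on `[-1,1]`), then the convolved pdf `f ⋆_μ g`, written as `H(μᵀx)`, is also
unimodal with mode `μ`: `H` is strictly increasing on `[-1,1]`, and the maximum of
`f ⋆_μ g` on `S^{p-1}` is attained exactly at `x = μ`. -/
theorem stmt_3 {p : ℕ} (hp : 2 ≤ p) (μ : Sph p) (F G : ℝ → ℝ)
    (hFpdf : IsPdfProfile p F) (hGpdf : IsPdfProfile p G)
    (hFc : ContinuousOn F (Icc (-1 : ℝ) 1)) (hGc : ContinuousOn G (Icc (-1 : ℝ) 1))
    (hFm : StrictMonoOn F (Icc (-1 : ℝ) 1)) (hGm : StrictMonoOn G (Icc (-1 : ℝ) 1)) :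
    ∃ H : ℝ → ℝ, (∀ x : Sph p, sphConv F G μ x = H (cosAngle μ x)) ∧
      StrictMonoOn H (Icc (-1 : ℝ) 1) ∧
      ∀ x : Sph p, x ≠ μ → sphConv F G μ x < sphConv F G μ μ := by
  classical
  -- a unit vector orthogonal to μ
  have hμne : (μ : EuclideanSpace ℝ (Fin p)) ≠ 0 := by
    intro h
    have h1 := norm_sph μ
    rw [h] at h1
    simp at h1
  have hfr1 : Module.finrank ℝ (ℝ ∙ (μ : EuclideanSpace ℝ (Fin p))) = 1 :=
    finrank_span_singleton hμne
  have hsum := Submodule.finrank_add_finrank_orthogonal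
    (K := (ℝ ∙ (μ : EuclideanSpace ℝ (Fin p))))
  rw [hfr1, finrank_euclideanSpace_fin] at hsum
  have hpos : 0 < Module.finrank ℝ (ℝ ∙ (μ : EuclideanSpace ℝ (Fin p)))ᗮ := by omega
  haveI : Nontrivial (ℝ ∙ (μ : EuclideanSpace ℝ (Fin p)))ᗮ :=
    Module.finrank_pos_iff.mp hpos
  obtain ⟨w, hw⟩ := exists_ne (0 : (ℝ ∙ (μ : EuclideanSpace ℝ (Fin p)))ᗮ)
  have hwE : (w : EuclideanSpace ℝ (Fin p)) ≠ 0 := fun h => hw (Subtype.ext h)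
  have hμw : ⟪(μ : EuclideanSpace ℝ (Fin p)), (w : EuclideanSpace ℝ (Fin p))⟫ = 0 :=
    Submodule.mem_orthogonal_singleton_iff_inner_right.mp w.2
  set ν : EuclideanSpace ℝ (Fin p) := ‖(w : EuclideanSpace ℝ (Fin p))‖⁻¹ • w with hνdef
  have hν1 : ‖ν‖ = 1 := norm_smul_inv_norm hwE
  have hμν : ⟪(μ : EuclideanSpace ℝ (Fin p)), ν⟫ = 0 := by
    rw [hνdef, real_inner_smul_right, hμw, mul_zero]
  -- the clamping function and the curve t ↦ xS t on the sphere
  set c : ℝ → ℝ := fun t => max (-1) (min 1 t) with hcdef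
  have hc : ∀ t, c t ∈ Icc (-1 : ℝ) 1 := by
    intro t
    constructor
    · exact le_max_left _ _
    · exact max_le (by norm_num) (min_le_left _ _)
  have hc' : ∀ t ∈ Icc (-1 : ℝ) 1, c t = t := by
    intro t ht
    rw [hcdef]
    simp only
    rw [min_eq_right ht.2, max_eq_right ht.1]
  have hxnorm : ∀ t : ℝ,
      ‖c t • (μ : EuclideanSpace ℝ (Fin p)) + Real.sqrt (1 - c t ^ 2) • ν‖ = 1 := by
    intro t
    have hct := hc t
    have hct2 : c t ^ 2 ≤ 1 := by nlinarith [hct.1, hct.2]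
    have hsq : Real.sqrt (1 - c t ^ 2) ^ 2 = 1 - c t ^ 2 := Real.sq_sqrt (by linarith)
    have hcross : ⟪c t • (μ : EuclideanSpace ℝ (Fin p)), Real.sqrt (1 - c t ^ 2) • ν⟫ = 0 := by
      rw [real_inner_smul_left, real_inner_smul_right, hμν]
      ring
    have hnsq : ‖c t • (μ : EuclideanSpace ℝ (Fin p)) + Real.sqrt (1 - c t ^ 2) • ν‖ ^ 2
        = 1 := by
      rw [norm_add_sq_real, hcross, norm_smul, norm_smul, norm_sph μ, hν1,
        Real.norm_eq_abs, Real.norm_eq_abs, mul_one, mul_one, sq_abs, sq_abs, hsq]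
      ring
    have hn0 : (0:ℝ) ≤ ‖c t • (μ : EuclideanSpace ℝ (Fin p)) + Real.sqrt (1 - c t ^ 2) • ν‖ :=
      norm_nonneg _
    have hfac : (‖c t • (μ : EuclideanSpace ℝ (Fin p)) + Real.sqrt (1 - c t ^ 2) • ν‖ - 1)
        * (‖c t • (μ : EuclideanSpace ℝ (Fin p)) + Real.sqrt (1 - c t ^ 2) • ν‖ + 1) = 0 := by
      linear_combination hnsq
    rcases mul_eq_zero.mp hfac with h | h
    · linarith
    · linarith
  set xS : ℝ → Sph p := fun t =>
    ⟨c t • (μ : EuclideanSpace ℝ (Fin p)) + Real.sqrt (1 - c t ^ 2) • ν, by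
      simp only [mem_sphere_iff_norm, sub_zero]
      exact hxnorm t⟩ with hxSdef
  have hcos : ∀ t, cosAngle μ (xS t) = c t := by
    intro t
    rw [hxSdef]
    simp only [cosAngle]
    rw [inner_add_right, real_inner_smul_right, real_inner_smul_right, hμν,
      real_inner_self_eq_norm_sq, norm_sph μ]
    ring
  refine ⟨fun t => sphConv F G μ (xS t), ?_, ?_, ?_⟩
  · intro x
    exact rep_lemma μ F G x (xS (cosAngle μ x))
      (by rw [hcos, hc' _ (cosAngle_mem_Icc μ x)])
  · intro t₁ h₁ t₂ h₂ h12
    exact key_lemma μ F G hFc hGc hFm hGm hp (xS t₁) (xS t₂)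
      (by rw [hcos, hcos, hc' _ h₁, hc' _ h₂]; exact h12)
  · intro x hx
    apply key_lemma μ F G hFc hGc hFm hGm hp x μ
    rw [cosAngle_self]
    refine lt_of_le_of_ne (cosAngle_mem_Icc μ x).2 ?_
    intro h
    exact hx (Subtype.ext
      ((inner_eq_one_iff_of_norm_eq_one (norm_sph μ) (norm_sph x)).mp h).symm)
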